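/- Let T be a theory of S4F standpoint logic and F an S5 standpoint structure for the vocabulary of T. If F is a minimal model of T, then the partition (Φ, Ψ) of Sub□(T) with Ψ := {□_u φ ∈ Sub□(T) : F ⊩ □_u φ} and Φ := Sub□(T) \ Ψ satisfies conditions (C1), (C2), and (C3); in particular, Sub□(T) has a partition satisfying (C1), (C2), and (C3). -/

import Mathlib

/-- Formulas of S4F standpoint logic over atoms `A` and standpoint names `S`. -/
inductive SForm (A S : Type) : Type
  | atom : A → SForm A S
  | neg  : SForm A S → SForm A S
  | and  : SForm A S → SForm A S → SForm A S
  | box  : S → SForm A S → SForm A S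

/-- Expressions: formulas or sharpening statements `s ≼ u`. -/
inductive SExpr (A S : Type) : Type
  | form  : SForm A S → SExpr A S
  | sharp : S → S → SExpr A S

/-- S4F standpoint structures over a carrier type `P` of precisifications. -/
structure SFFS (A S P : Type) (star : S) where
  Pi : Set P
  sig : S → Set P
  tau : S → Set P
  val : P → Set A
  nonempty_Pi : Pi.Nonempty
  sig_sub : ∀ s, sig s ⊆ Pi
  tau_sub : ∀ s, tau s ⊆ Pi
  star_union : sig star ∪ tau star = Pi
  sig_nonempty : ∀ s, (sig s).Nonempty
  sig_tau_disj : ∀ s u, sig s ∩ tau u = ∅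

/-- Pointed satisfaction `F, π ⊩ φ` for formulas. -/
def SFFS.sat {A S P : Type} {star : S} (F : SFFS A S P star) : SForm A S → P → Prop
  | SForm.atom p, π => p ∈ F.val π
  | SForm.neg φ, π => ¬ F.sat φ π
  | SForm.and φ ψ, π => F.sat φ π ∧ F.sat ψ π
  | SForm.box s φ, π =>
      (π ∈ F.sig star → ∀ π' ∈ F.sig s, F.sat φ π') ∧
      (π ∈ F.tau star → ∀ π' ∈ F.sig s ∪ F.tau s, F.sat φ π')

/-- Pointed satisfaction for expressions. -/
def SFFS.satE {A S P : Type} {star : S} (F : SFFS A S P star) (e : SExpr A S) (π : P) : Prop :=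
  match e with
  | SExpr.form φ => F.sat φ π
  | SExpr.sharp s u => F.sig s ⊆ F.sig u ∧ F.tau s ⊆ F.tau u

/-- Global satisfaction `F ⊩ φ` of a formula. -/
def SFFS.models {A S P : Type} {star : S} (F : SFFS A S P star) (φ : SForm A S) : Prop :=
  ∀ π ∈ F.Pi, F.sat φ π

/-- Global satisfaction of an expression. -/
def SFFS.modelsE {A S P : Type} {star : S} (F : SFFS A S P star) (e : SExpr A S) : Prop :=
  ∀ π ∈ F.Pi, F.satE e π

/-- `F` is a model of a theory (set of expressions) `T`. -/
def SFFS.isModel {A S P : Type} {star : S} (F : SFFS A S P star) (T : Set (SExpr A S)) : Prop :=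
  ∀ e ∈ T, F.modelsE e

/-- `F` is a model of a set of formulas `T`. -/
def SFFS.isModelF {A S P : Type} {star : S} (F : SFFS A S P star) (T : Set (SForm A S)) : Prop :=
  ∀ φ ∈ T, F.models φ

/-- S5 standpoint structures: all outer sets empty. -/
def SFFS.IsS5 {A S P : Type} {star : S} (F : SFFS A S P star) : Prop :=
  ∀ s, F.tau s = ∅

/-- Determination preorder `F1 ⊴_s F2`, per standpoint. -/
def prefS {A S P1 P2 : Type} {star : S} (F1 : SFFS A S P1 star) (F2 : SFFS A S P2 star)
    (s : S) : Prop :=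
  F2.val '' F2.sig s = F1.val '' F1.sig s ∧
  F2.val '' F2.tau s ⊆ F1.val '' (F1.sig s ∪ F1.tau s)

/-- Determination preorder `F1 ⊴ F2`. -/
def pref {A S P1 P2 : Type} {star : S} (F1 : SFFS A S P1 star) (F2 : SFFS A S P2 star) : Prop :=
  ∀ s, prefS F1 F2 s

/-- Entailment `T ⊨ e`: every model of `T` satisfies `e`. -/
def Entails {A S : Type} (star : S) (T : Set (SExpr A S)) (e : SExpr A S) : Prop :=
  ∀ (P : Type) (F : SFFS A S P star), F.isModel T → F.modelsE e

/-- Derivable sharpening `T ⊢ s ≼ u`. -/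
inductive Sharpens {A S : Type} (star : S) (T : Set (SExpr A S)) : S → S → Prop
  | of_mem {s u : S} : SExpr.sharp s u ∈ T → Sharpens star T s u
  | to_star (s : S) : Sharpens star T s star
  | refl (s : S) : Sharpens star T s s
  | trans {s t u : S} : SExpr.sharp s t ∈ T → Sharpens star T t u → Sharpens star T s u

/-- An S5 standpoint structure `F` is a minimal model of a theory `T`. -/
def isMinimalModel {A S P : Type} {star : S} (F : SFFS A S P star) (T : Set (SExpr A S)) : Prop :=
  F.IsS5 ∧ F.isModel T ∧
  ∀ (P' : Type) (F' : SFFS A S P' star), pref F' F → F'.isModel T → (pref F' F ∧ pref F F')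

/-- The set of subformulas of a formula. -/
def subf {A S : Type} : SForm A S → Set (SForm A S)
  | SForm.atom p => {SForm.atom p}
  | SForm.neg φ => insert (SForm.neg φ) (subf φ)
  | SForm.and φ ψ => insert (SForm.and φ ψ) (subf φ ∪ subf ψ)
  | SForm.box s φ => insert (SForm.box s φ) (subf φ)

/-- Subformulas of an expression. -/
def subE {A S : Type} : SExpr A S → Set (SForm A S)
  | SExpr.form φ => subf φ
  | SExpr.sharp _ _ => ∅

/-- `Sub□(T)`: boxed subformulas of expressions of `T`. -/
def SubBox {A S : Type} (T : Set (SExpr A S)) : Set (SForm A S) :=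
  {χ | (∃ (s : S) (φ : SForm A S), χ = SForm.box s φ) ∧ ∃ e ∈ T, χ ∈ subE e}

/-- Propositional satisfaction over the extended vocabulary `A± = A ∪ Sub□(T)`:
boxed formulas are read as propositional atoms (valuation `EB`). -/
def psat {A S : Type} (EA : Set A) (EB : Set (SForm A S)) : SForm A S → Prop
  | SForm.atom p => p ∈ EA
  | SForm.neg φ => ¬ psat EA EB φ
  | SForm.and φ ψ => psat EA EB φ ∧ psat EA EB ψ
  | SForm.box s φ => SForm.box s φ ∈ EB

/-- Propositional satisfaction of expressions: sharpening statements are also read as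
propositional atoms (valuation `ES`). -/
def psatE {A S : Type} (EA : Set A) (EB : Set (SForm A S)) (ES : Set (S × S)) :
    SExpr A S → Prop
  | SExpr.form φ => psat EA EB φ
  | SExpr.sharp s u => (s, u) ∈ ES

/-- `Ψ_s := {ψ : □_u ψ ∈ Ψ for some u with T ⊢ s ≼ u}`. -/
def PsiS {A S : Type} (star : S) (T : Set (SExpr A S)) (Ψ : Set (SForm A S)) (s : S) :
    Set (SForm A S) :=
  {ψ | ∃ u : S, SForm.box u ψ ∈ Ψ ∧ Sharpens star T s u}

/-- `Θ_s := T ∪ {¬χ : χ ∈ Φ} ∪ Ψ ∪ Ψ_s`. -/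
def Theta {A S : Type} (star : S) (T : Set (SExpr A S)) (Φ Ψ : Set (SForm A S)) (s : S) :
    Set (SExpr A S) :=
  T ∪ (SExpr.form '' (SForm.neg '' Φ)) ∪ (SExpr.form '' Ψ) ∪
    (SExpr.form '' PsiS star T Ψ s)

/-- Condition (C1): each `Θ_s` is propositionally satisfiable. -/
def C1 {A S : Type} (star : S) (T : Set (SExpr A S)) (Φ Ψ : Set (SForm A S)) : Prop :=
  ∀ s : S, ∃ (EA : Set A) (EB : Set (SForm A S)) (ES : Set (S × S)),
    ∀ e ∈ Theta star T Φ Ψ s, psatE EA EB ES e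

/-- Condition (C2): for every `s` and `□_u φ ∈ Φ` with `T ⊢ u ≼ s`, the theory
`Θ_s ∪ {¬φ}` is propositionally satisfiable. -/
def C2 {A S : Type} (star : S) (T : Set (SExpr A S)) (Φ Ψ : Set (SForm A S)) : Prop :=
  ∀ (s u : S) (φ : SForm A S), SForm.box u φ ∈ Φ → Sharpens star T u s →
    ∃ (EA : Set A) (EB : Set (SForm A S)) (ES : Set (S × S)),
      (∀ e ∈ Theta star T Φ Ψ s, psatE EA EB ES e) ∧ psat EA EB (SForm.neg φ)

/-- Condition (C3): for every `□_s ψ ∈ Ψ`, `T ∪ {¬χ : χ ∈ Φ} ⊨ □_s ψ` in S4F standpoint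
logic. -/
def C3 {A S : Type} (star : S) (T : Set (SExpr A S)) (Φ Ψ : Set (SForm A S)) : Prop :=
  ∀ (s : S) (ψ : SForm A S), SForm.box s ψ ∈ Ψ →
    Entails star (T ∪ (SExpr.form '' (SForm.neg '' Φ)))
      (SExpr.form (SForm.box s ψ))

/-- Inner precisifications of `F_P`: `σ(s) := {F ∩ A : F ⊆ A±, F ⊨ Θ_s}`. -/
def sigP {A S : Type} (star : S) (T : Set (SExpr A S)) (Φ Ψ : Set (SForm A S)) (s : S) :
    Set (Set A) :=
  {EA | ∃ (EB : Set (SForm A S)) (ES : Set (S × S)),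
    ∀ e ∈ Theta star T Φ Ψ s, psatE EA EB ES e}

section AuxDev

open Classical Set

variable {A S P Q R : Type} {star : S}

/-! ### Basic structural lemmas -/

lemma SFFS.not_sig_tau (G : SFFS A S P star) {x : P} {s u : S}
    (h1 : x ∈ G.sig s) (h2 : x ∈ G.tau u) : False := by
  have := G.sig_tau_disj s u
  exact (Set.eq_empty_iff_forall_notMem.mp this) x ⟨h1, h2⟩

lemma SFFS.sig_sub_star (G : SFFS A S P star) (u : S) : G.sig u ⊆ G.sig star := by
  intro x hx
  have hPi : x ∈ G.Pi := G.sig_sub u hx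
  rw [← G.star_union] at hPi
  rcases hPi with h | h
  · exact h
  · exact (G.not_sig_tau hx h).elim

lemma SFFS.tau_sub_star (G : SFFS A S P star) (u : S) : G.tau u ⊆ G.tau star := by
  intro x hx
  have hPi : x ∈ G.Pi := G.tau_sub u hx
  rw [← G.star_union] at hPi
  rcases hPi with h | h
  · exact (G.not_sig_tau h hx).elim
  · exact h

lemma SFFS.s5_sig_star (G : SFFS A S P star) (h5 : G.IsS5) : G.sig star = G.Pi := by
  rw [← G.star_union, h5 star, Set.union_empty]

/-! ### Box satisfaction helpers -/

lemma sat_box_inner (G : SFFS A S P star) {π : P} (h1 : π ∈ G.sig star)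
    (h2 : π ∉ G.tau star) (u : S) (χ : SForm A S) :
    G.sat (SForm.box u χ) π ↔ ∀ π' ∈ G.sig u, G.sat χ π' := by
  simp only [SFFS.sat]
  exact ⟨fun h => h.1 h1, fun h => ⟨fun _ => h, fun hc => absurd hc h2⟩⟩

lemma sat_box_outer (G : SFFS A S P star) {π : P} (h1 : π ∉ G.sig star)
    (h2 : π ∈ G.tau star) (u : S) (χ : SForm A S) :
    G.sat (SForm.box u χ) π ↔ ∀ π' ∈ G.sig u ∪ G.tau u, G.sat χ π' := by
  simp only [SFFS.sat]
  exact ⟨fun h => h.2 h2, fun h => ⟨fun hc => absurd hc h1, fun _ => h⟩⟩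

lemma sat_box_S5 (G : SFFS A S P star) (h5 : G.IsS5) {π : P} (hπ : π ∈ G.Pi)
    (u : S) (χ : SForm A S) :
    G.sat (SForm.box u χ) π ↔ ∀ π' ∈ G.sig u, G.sat χ π' := by
  refine sat_box_inner G ?_ ?_ u χ
  · rw [G.s5_sig_star h5]; exact hπ
  · rw [h5 star]; exact notMem_empty π

lemma models_box_S5 (G : SFFS A S P star) (h5 : G.IsS5) (u : S) (χ : SForm A S) :
    G.models (SForm.box u χ) ↔ ∀ π ∈ G.sig u, G.sat χ π := by
  constructor
  · intro h
    obtain ⟨π, hπ⟩ := G.nonempty_Pi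
    exact (sat_box_S5 G h5 hπ u χ).mp (h π hπ)
  · intro h π hπ
    exact (sat_box_S5 G h5 hπ u χ).mpr h

/-! ### Subformula lemmas -/

lemma mem_subf_self (φ : SForm A S) : φ ∈ subf φ := by
  cases φ <;> simp [subf]

lemma subf_trans {φ ψ χ : SForm A S} (h1 : χ ∈ subf ψ) (h2 : ψ ∈ subf φ) :
    χ ∈ subf φ := by
  induction φ with
  | atom p =>
    simp only [subf, Set.mem_singleton_iff] at h2
    subst h2; simpa [subf] using h1
  | neg φ ih =>
    simp only [subf, Set.mem_insert_iff] at h2 ⊢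
    rcases h2 with rfl | h
    · simpa [subf] using h1
    · exact Or.inr (ih h)
  | and φ₁ φ₂ ih1 ih2 =>
    simp only [subf, Set.mem_insert_iff, Set.mem_union] at h2 ⊢
    rcases h2 with rfl | h | h
    · simpa [subf] using h1
    · exact Or.inr (Or.inl (ih1 h))
    · exact Or.inr (Or.inr (ih2 h))
  | box s φ ih =>
    simp only [subf, Set.mem_insert_iff] at h2 ⊢
    rcases h2 with rfl | h
    · simpa [subf] using h1
    · exact Or.inr (ih h)

/-- All boxed subformulas of `φ` belong to `Sub□(T)`. -/
def BoxedIn {A S : Type} (T : Set (SExpr A S)) (φ : SForm A S) : Prop :=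
  ∀ (u : S) (χ : SForm A S), SForm.box u χ ∈ subf φ → SForm.box u χ ∈ SubBox T

lemma BoxedIn.neg {T : Set (SExpr A S)} {φ : SForm A S}
    (h : BoxedIn T (SForm.neg φ)) : BoxedIn T φ :=
  fun u χ hχ => h u χ (Set.mem_insert_iff.mpr (Or.inr hχ))

lemma BoxedIn.and_left {T : Set (SExpr A S)} {φ ψ : SForm A S}
    (h : BoxedIn T (SForm.and φ ψ)) : BoxedIn T φ :=
  fun u χ hχ => h u χ (Set.mem_insert_iff.mpr (Or.inr (Or.inl hχ)))

lemma BoxedIn.and_right {T : Set (SExpr A S)} {φ ψ : SForm A S}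
    (h : BoxedIn T (SForm.and φ ψ)) : BoxedIn T ψ :=
  fun u χ hχ => h u χ (Set.mem_insert_iff.mpr (Or.inr (Or.inr hχ)))

lemma BoxedIn.box {T : Set (SExpr A S)} {s : S} {φ : SForm A S}
    (h : BoxedIn T (SForm.box s φ)) : BoxedIn T φ :=
  fun u χ hχ => h u χ (Set.mem_insert_iff.mpr (Or.inr hχ))

lemma BoxedIn.self {T : Set (SExpr A S)} {s : S} {φ : SForm A S}
    (h : BoxedIn T (SForm.box s φ)) : SForm.box s φ ∈ SubBox T :=
  h s φ (mem_subf_self _)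

lemma boxedIn_of_memSubBox {T : Set (SExpr A S)} {χ : SForm A S}
    (h : χ ∈ SubBox T) : BoxedIn T χ := by
  obtain ⟨-, e, heT, hsub⟩ := h
  intro u χ' hχ'
  refine ⟨⟨u, χ', rfl⟩, e, heT, ?_⟩
  cases e with
  | form φ₀ => exact subf_trans hχ' hsub
  | sharp a b => simp [subE] at hsub

lemma boxedIn_of_form_mem {T : Set (SExpr A S)} {φ : SForm A S}
    (h : SExpr.form φ ∈ T) : BoxedIn T φ :=
  fun u χ hχ => ⟨⟨u, χ, rfl⟩, SExpr.form φ, h, hχ⟩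

/-! ### Propositional satisfaction vs satisfaction at a world -/

lemma psat_iff (F : SFFS A S P star) (π : P) :
    ∀ φ : SForm A S, psat (F.val π) {χ | F.sat χ π} φ ↔ F.sat φ π := by
  intro φ
  induction φ with
  | atom p => exact Iff.rfl
  | neg φ ih => simp only [psat, SFFS.sat]; exact not_congr ih
  | and φ ψ ih1 ih2 => simp only [psat, SFFS.sat]; exact and_congr ih1 ih2
  | box s φ ih => exact Iff.rfl

/-! ### Sharpening monotonicity -/

lemma sharpens_sig_mono {T : Set (SExpr A S)} (G : SFFS A S Q star)
    (hM : G.isModel T) {s u : S} (h : Sharpens star T s u) :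
    G.sig s ⊆ G.sig u := by
  induction h with
  | of_mem h =>
    obtain ⟨π, hπ⟩ := G.nonempty_Pi
    have := hM _ h π hπ
    simp only [SFFS.satE] at this
    exact this.1
  | to_star s => exact G.sig_sub_star s
  | refl s => exact subset_rfl
  | trans h _ ih =>
    obtain ⟨π, hπ⟩ := G.nonempty_Pi
    have h2 := hM _ h π hπ
    simp only [SFFS.satE] at h2
    exact subset_trans h2.1 ih

/-! ### The partition induced by `F` -/

/-- `Ψ`: boxed subformulas of `T` globally satisfied by `F`. -/
def PsiOf {A S P : Type} {star : S} (T : Set (SExpr A S)) (F : SFFS A S P star) :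
    Set (SForm A S) := {χ ∈ SubBox T | F.models χ}

/-- `Φ`: the remaining boxed subformulas of `T`. -/
def PhiOf {A S P : Type} {star : S} (T : Set (SExpr A S)) (F : SFFS A S P star) :
    Set (SForm A S) := SubBox T \ PsiOf T F

/-! ### Conditions (C1) and (C2) -/

lemma theta_sat {T : Set (SExpr A S)} (F : SFFS A S P star) (h5 : F.IsS5)
    (hM : F.isModel T) {s : S} {π : P} (hπ : π ∈ F.sig s) :
    ∀ e ∈ Theta star T (PhiOf T F) (PsiOf T F) s,
      psatE (F.val π) {χ | F.sat χ π}
        {p : S × S | F.sig p.1 ⊆ F.sig p.2 ∧ F.tau p.1 ⊆ F.tau p.2} e := by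
  have hπPi : π ∈ F.Pi := F.sig_sub s hπ
  intro e he
  rcases he with ((he | he) | he) | he
  · -- e ∈ T
    have hsat := hM e he π hπPi
    cases e with
    | form φ => exact (psat_iff F π φ).mpr hsat
    | sharp a b =>
      simp only [SFFS.satE] at hsat
      exact hsat
  · -- e = form (neg χ), χ ∈ Φ
    obtain ⟨ξ, hξ, rfl⟩ := he
    obtain ⟨χ, hχ, rfl⟩ := hξ
    obtain ⟨hχSub, hχnot⟩ := hχ
    obtain ⟨⟨u, φ₀, rfl⟩, -⟩ := id hχSub
    have hnm : ¬ F.models (SForm.box u φ₀) := fun hm => hχnot ⟨hχSub, hm⟩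
    show psat (F.val π) {χ | F.sat χ π} (SForm.neg (SForm.box u φ₀))
    have : ¬ F.sat (SForm.box u φ₀) π := by
      rw [sat_box_S5 F h5 hπPi]
      intro hall
      exact hnm ((models_box_S5 F h5 u φ₀).mpr hall)
    simpa only [psat] using (not_congr (psat_iff F π (SForm.box u φ₀))).mpr this
  · -- e = form χ, χ ∈ Ψ
    obtain ⟨χ, hχ, rfl⟩ := he
    exact (psat_iff F π χ).mpr (hχ.2 π hπPi)
  · -- e = form ψ, ψ ∈ Ψ_s
    obtain ⟨ψ, ⟨u, hbox, hsh⟩, rfl⟩ := he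
    have hsub : F.sig s ⊆ F.sig u := sharpens_sig_mono F hM hsh
    have := (models_box_S5 F h5 u ψ).mp hbox.2 π (hsub hπ)
    exact (psat_iff F π ψ).mpr this

lemma C1_holds {T : Set (SExpr A S)} (F : SFFS A S P star) (h5 : F.IsS5)
    (hM : F.isModel T) : C1 star T (PhiOf T F) (PsiOf T F) := by
  intro s
  obtain ⟨π, hπ⟩ := F.sig_nonempty s
  exact ⟨F.val π, {χ | F.sat χ π},
    {p : S × S | F.sig p.1 ⊆ F.sig p.2 ∧ F.tau p.1 ⊆ F.tau p.2},
    theta_sat F h5 hM hπ⟩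

lemma C2_holds {T : Set (SExpr A S)} (F : SFFS A S P star) (h5 : F.IsS5)
    (hM : F.isModel T) : C2 star T (PhiOf T F) (PsiOf T F) := by
  intro s u φ hΦ hsh
  have hnm : ¬ F.models (SForm.box u φ) := fun hm => hΦ.2 ⟨hΦ.1, hm⟩
  have : ¬ ∀ π ∈ F.sig u, F.sat φ π := fun h => hnm ((models_box_S5 F h5 u φ).mpr h)
  push_neg at this
  obtain ⟨π, hπu, hπφ⟩ := this
  have hπs : π ∈ F.sig s := sharpens_sig_mono F hM hsh hπu
  refine ⟨F.val π, {χ | F.sat χ π},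
    {p : S × S | F.sig p.1 ⊆ F.sig p.2 ∧ F.tau p.1 ⊆ F.tau p.2},
    theta_sat F h5 hM hπs, ?_⟩
  simpa only [psat] using (not_congr (psat_iff F π φ)).mpr hπφ

/-! ### Combined structures for the minimality argument -/

/-- Combination of the S5 structure `F` (as inner part) with outer worlds `t`. -/
def comb {A S P Q : Type} {star : S} (F : SFFS A S P star) (h5 : F.IsS5)
    (t : S → Set Q) (ht : ∀ u, t u ⊆ t star) (v : Q → Set A) :
    SFFS A S (P ⊕ Q) star where
  Pi := Sum.inl '' F.Pi ∪ Sum.inr '' t star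
  sig u := Sum.inl '' F.sig u
  tau u := Sum.inr '' t u
  val := Sum.elim F.val v
  nonempty_Pi := by
    obtain ⟨π, hπ⟩ := F.nonempty_Pi
    exact ⟨Sum.inl π, Or.inl (Set.mem_image_of_mem _ hπ)⟩
  sig_sub u := by
    rintro x ⟨π, hπ, rfl⟩
    exact Or.inl (Set.mem_image_of_mem _ (F.sig_sub u hπ))
  tau_sub u := by
    rintro x ⟨q, hq, rfl⟩
    exact Or.inr (Set.mem_image_of_mem _ (ht u hq))
  star_union := by
    show Sum.inl '' F.sig star ∪ Sum.inr '' t star = Sum.inl '' F.Pi ∪ Sum.inr '' t star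
    rw [F.s5_sig_star h5]
  sig_nonempty u := by
    obtain ⟨π, hπ⟩ := F.sig_nonempty u
    exact ⟨Sum.inl π, Set.mem_image_of_mem _ hπ⟩
  sig_tau_disj s u := by
    apply Set.eq_empty_iff_forall_notMem.mpr
    rintro x ⟨⟨a, -, rfl⟩, ⟨b, -, hb⟩⟩
    exact Sum.inr_ne_inl hb

lemma comb_sat_inl (F : SFFS A S P star) (h5 : F.IsS5)
    (t : S → Set Q) (ht : ∀ u, t u ⊆ t star) (v : Q → Set A) :
    ∀ (φ : SForm A S), ∀ π ∈ F.Pi,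
      ((comb F h5 t ht v).sat φ (Sum.inl π) ↔ F.sat φ π) := by
  intro φ
  induction φ with
  | atom p => intro π hπ; exact Iff.rfl
  | neg φ ih => intro π hπ; simp only [SFFS.sat]; exact not_congr (ih π hπ)
  | and φ ψ ih1 ih2 => intro π hπ; simp only [SFFS.sat]
                       exact and_congr (ih1 π hπ) (ih2 π hπ)
  | box u χ ih =>
    intro π hπ
    have h1 : Sum.inl π ∈ (comb F h5 t ht v).sig star :=
      ⟨π, by rw [F.s5_sig_star h5]; exact hπ, rfl⟩
    have h2 : Sum.inl (α := P) (β := Q) π ∉ (comb F h5 t ht v).tau star := by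
      rintro ⟨q, -, hq⟩; exact Sum.inr_ne_inl hq
    rw [sat_box_inner _ h1 h2, sat_box_S5 F h5 hπ u χ]
    constructor
    · intro h π' hπ'
      exact (ih π' (F.sig_sub u hπ')).mp (h _ ⟨π', hπ', rfl⟩)
    · rintro h x ⟨π', hπ', rfl⟩
      exact (ih π' (F.sig_sub u hπ')).mpr (h π' hπ')

lemma pref_comb (F : SFFS A S P star) (h5 : F.IsS5)
    (t : S → Set Q) (ht : ∀ u, t u ⊆ t star) (v : Q → Set A) :
    pref (comb F h5 t ht v) F := by
  intro s
  constructor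
  · show F.val '' F.sig s = Sum.elim F.val v '' (Sum.inl '' F.sig s)
    rw [Set.image_image]
    simp
  · rw [h5 s]
    simp

lemma comb_min_incl {T : Set (SExpr A S)} (F : SFFS A S P star) (h5 : F.IsS5)
    (hminimal : ∀ (P' : Type) (F' : SFFS A S P' star),
      pref F' F → F'.isModel T → (pref F' F ∧ pref F F'))
    (t : S → Set Q) (ht : ∀ u, t u ⊆ t star) (v : Q → Set A)
    (hmod : (comb F h5 t ht v).isModel T) :
    ∀ u, v '' t u ⊆ F.val '' F.sig u := by
  have h := (hminimal _ (comb F h5 t ht v) (pref_comb F h5 t ht v) hmod).2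
  intro u
  have h2 := (h u).2
  rw [show (comb F h5 t ht v).val '' ((comb F h5 t ht v).tau u) = v '' t u from by
        show Sum.elim F.val v '' (Sum.inr '' t u) = v '' t u
        rw [Set.image_image]; simp] at h2
  rwa [h5 u, Set.union_empty] at h2

/-! ### The inner S5 restriction of an arbitrary S4F structure -/

def innerS5 {A S R : Type} {star : S} (F' : SFFS A S R star) : SFFS A S R star where
  Pi := F'.sig star
  sig := F'.sig
  tau _ := ∅
  val := F'.val
  nonempty_Pi := F'.sig_nonempty star
  sig_sub u := F'.sig_sub_star u
  tau_sub _ := Set.empty_subset _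
  star_union := Set.union_empty _
  sig_nonempty := F'.sig_nonempty
  sig_tau_disj _ _ := Set.inter_empty _

lemma innerS5_sat (F' : SFFS A S R star) :
    ∀ φ : SForm A S, ∀ π ∈ F'.sig star, ((innerS5 F').sat φ π ↔ F'.sat φ π) := by
  intro φ
  induction φ with
  | atom p => intro π hπ; exact Iff.rfl
  | neg φ ih => intro π hπ; simp only [SFFS.sat]; exact not_congr (ih π hπ)
  | and φ ψ ih1 ih2 => intro π hπ; simp only [SFFS.sat]
                       exact and_congr (ih1 π hπ) (ih2 π hπ)
  | box u χ ih =>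
    intro π hπ
    have h2 : π ∉ F'.tau star := fun hc => F'.not_sig_tau hπ hc
    rw [sat_box_inner (innerS5 F') (show π ∈ (innerS5 F').sig star from hπ)
          (Set.notMem_empty π), sat_box_inner F' hπ h2]
    constructor
    · intro h π' hπ'; exact (ih π' (F'.sig_sub_star u hπ')).mp (h π' hπ')
    · intro h π' hπ'; exact (ih π' (F'.sig_sub_star u hπ')).mpr (h π' hπ')

lemma innerS5_isModel {T' : Set (SExpr A S)} (F' : SFFS A S R star)
    (hM : F'.isModel T') : (innerS5 F').isModel T' := by
  intro e he π hπ
  have hPi : π ∈ F'.Pi := F'.sig_sub star hπ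
  have hs := hM e he π hPi
  cases e with
  | form φ => exact (innerS5_sat F' φ π hπ).mpr hs
  | sharp a b =>
    simp only [SFFS.satE] at hs ⊢
    exact ⟨hs.1, Set.empty_subset _⟩

lemma negPhi_false {T : Set (SExpr A S)} {F : SFFS A S P star} (G : SFFS A S Q star)
    (hG : G.isModel (T ∪ (SExpr.form '' (SForm.neg '' PhiOf T F)))) :
    ∀ χ ∈ PhiOf T F, ∀ q ∈ G.Pi, ¬ G.sat χ q := by
  intro χ hχ q hq
  exact hG (SExpr.form (SForm.neg χ)) (Or.inr ⟨SForm.neg χ, ⟨χ, hχ, rfl⟩, rfl⟩) q hq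

/-! ### Transfer lemmas for S5 models of `T ∪ ¬Φ` -/

lemma combG_sat_inr {T : Set (SExpr A S)} (F : SFFS A S P star) (h5 : F.IsS5)
    (G : SFFS A S Q star) (hG5 : G.IsS5)
    (hneg : ∀ χ ∈ PhiOf T F, ∀ q ∈ G.Pi, ¬ G.sat χ q) :
    ∀ φ : SForm A S, BoxedIn T φ → ∀ q ∈ G.Pi,
      ((comb F h5 G.sig G.sig_sub_star G.val).sat φ (Sum.inr q) ↔ G.sat φ q) := by
  intro φ
  induction φ with
  | atom p => intro _ q hq; exact Iff.rfl
  | neg φ ih => intro hB q hq; simp only [SFFS.sat]; exact not_congr (ih hB.neg q hq)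
  | and φ ψ ih1 ih2 =>
    intro hB q hq; simp only [SFFS.sat]
    exact and_congr (ih1 hB.and_left q hq) (ih2 hB.and_right q hq)
  | box u χ ih =>
    intro hB q hq
    have hb : SForm.box u χ ∈ SubBox T := hB.self
    have h1 : Sum.inr (α := P) (β := Q) q ∉ (comb F h5 G.sig G.sig_sub_star G.val).sig star := by
      rintro ⟨π, -, hc⟩; exact Sum.inl_ne_inr hc
    have h2 : Sum.inr q ∈ (comb F h5 G.sig G.sig_sub_star G.val).tau star :=
      ⟨q, by rw [G.s5_sig_star hG5]; exact hq, rfl⟩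
    rw [sat_box_outer _ h1 h2, sat_box_S5 G hG5 hq u χ]
    by_cases hm : F.models (SForm.box u χ)
    · constructor
      · intro h q' hq'
        exact (ih hB.box q' (G.sig_sub u hq')).mp (h _ (Or.inr ⟨q', hq', rfl⟩))
      · intro h x hx
        rcases hx with ⟨π', hπ', rfl⟩ | ⟨q', hq', rfl⟩
        · exact (comb_sat_inl F h5 G.sig _ G.val χ π' (F.sig_sub u hπ')).mpr
            ((models_box_S5 F h5 u χ).mp hm π' hπ')
        · exact (ih hB.box q' (G.sig_sub u hq')).mpr (h q' hq')
    · apply iff_of_false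
      · intro h
        apply hm
        rw [models_box_S5 F h5]
        intro π' hπ'
        exact (comb_sat_inl F h5 G.sig _ G.val χ π' (F.sig_sub u hπ')).mp
          (h _ (Or.inl ⟨π', hπ', rfl⟩))
      · intro h
        exact hneg _ ⟨hb, fun hc => hm hc.2⟩ q hq ((sat_box_S5 G hG5 hq u χ).mpr h)

lemma combG_isModel {T : Set (SExpr A S)} (F : SFFS A S P star) (h5 : F.IsS5)
    (hMF : F.isModel T) (G : SFFS A S Q star) (hG5 : G.IsS5)
    (hG : G.isModel (T ∪ (SExpr.form '' (SForm.neg '' PhiOf T F)))) :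
    (comb F h5 G.sig G.sig_sub_star G.val).isModel T := by
  have hGT : G.isModel T := fun e he => hG e (Or.inl he)
  intro e he x hx
  cases e with
  | form φ =>
    rcases hx with ⟨π, hπ, rfl⟩ | ⟨q, hq, rfl⟩
    · exact (comb_sat_inl F h5 G.sig _ G.val φ π hπ).mpr (hMF _ he π hπ)
    · have hqPi : q ∈ G.Pi := G.sig_sub star hq
      exact (combG_sat_inr F h5 G hG5 (negPhi_false G hG) φ (boxedIn_of_form_mem he)
        q hqPi).mpr (hGT _ he q hqPi)
  | sharp a b =>
    obtain ⟨π₀, hπ₀⟩ := F.nonempty_Pi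
    obtain ⟨q₀, hq₀⟩ := G.nonempty_Pi
    have hF := hMF _ he π₀ hπ₀
    have hG2 := hGT _ he q₀ hq₀
    simp only [SFFS.satE] at hF hG2 ⊢
    exact ⟨Set.image_mono hF.1, Set.image_mono hG2.1⟩

lemma transfer_S5 {T : Set (SExpr A S)} (F : SFFS A S P star) (h5 : F.IsS5)
    (G : SFFS A S Q star) (hG5 : G.IsS5)
    (hneg : ∀ χ ∈ PhiOf T F, ∀ q ∈ G.Pi, ¬ G.sat χ q)
    (incl : ∀ u, G.val '' G.sig u ⊆ F.val '' F.sig u) :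
    ∀ φ : SForm A S, BoxedIn T φ → ∀ q ∈ G.Pi, ∀ π ∈ F.Pi,
      G.val q = F.val π → (G.sat φ q ↔ F.sat φ π) := by
  intro φ
  induction φ with
  | atom p =>
    intro _ q hq π hπ hv
    show p ∈ G.val q ↔ p ∈ F.val π
    rw [hv]
  | neg φ ih =>
    intro hB q hq π hπ hv; simp only [SFFS.sat]
    exact not_congr (ih hB.neg q hq π hπ hv)
  | and φ ψ ih1 ih2 =>
    intro hB q hq π hπ hv; simp only [SFFS.sat]
    exact and_congr (ih1 hB.and_left q hq π hπ hv) (ih2 hB.and_right q hq π hπ hv)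
  | box u χ ih =>
    intro hB q hq π hπ hv
    rw [sat_box_S5 G hG5 hq u χ, sat_box_S5 F h5 hπ u χ]
    by_cases hm : F.models (SForm.box u χ)
    · apply iff_of_true
      · intro q' hq'
        obtain ⟨π', hπ', heq⟩ := incl u ⟨q', hq', rfl⟩
        exact (ih hB.box q' (G.sig_sub u hq') π' (F.sig_sub u hπ') heq.symm).mpr
          ((models_box_S5 F h5 u χ).mp hm π' hπ')
      · exact (models_box_S5 F h5 u χ).mp hm
    · apply iff_of_false
      · intro h
        exact hneg _ ⟨hB.self, fun hc => hm hc.2⟩ q hq ((sat_box_S5 G hG5 hq u χ).mpr h)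
      · intro h
        exact hm ((models_box_S5 F h5 u χ).mpr h)

lemma S5_psi_sat {T : Set (SExpr A S)} {F : SFFS A S P star}
    (hmin : isMinimalModel F T) (G : SFFS A S Q star) (hG5 : G.IsS5)
    (hG : G.isModel (T ∪ (SExpr.form '' (SForm.neg '' PhiOf T F)))) :
    ∀ (u : S) (χ : SForm A S), SForm.box u χ ∈ PsiOf T F →
      ∀ q ∈ G.sig u, G.sat χ q := by
  have h5 := hmin.1
  have hneg := negPhi_false G hG
  have hmodC := combG_isModel F h5 hmin.2.1 G hG5 hG
  have incl := comb_min_incl F h5 hmin.2.2 G.sig G.sig_sub_star G.val hmodC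
  intro u χ hχ q hq
  obtain ⟨π', hπ', heq⟩ := incl u ⟨q, hq, rfl⟩
  have hBχ : BoxedIn T χ := (boxedIn_of_memSubBox hχ.1).box
  exact (transfer_S5 F h5 G hG5 hneg incl χ hBχ q (G.sig_sub u hq) π'
    (F.sig_sub u hπ') heq.symm).mpr ((models_box_S5 F h5 u χ).mp hχ.2 π' hπ')

/-! ### The inner condition for arbitrary S4F models of `T ∪ ¬Φ` -/

lemma bin_holds {T : Set (SExpr A S)} {F : SFFS A S P star}
    (hmin : isMinimalModel F T) (F' : SFFS A S R star)
    (hF' : F'.isModel (T ∪ (SExpr.form '' (SForm.neg '' PhiOf T F)))) :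
    ∀ (u : S) (χ : SForm A S), SForm.box u χ ∈ PsiOf T F →
      ∀ π' ∈ F'.sig u, F'.sat χ π' := by
  have hI5 : (innerS5 F').IsS5 := fun _ => rfl
  have hImod := innerS5_isModel F' hF'
  have hkey := S5_psi_sat hmin (innerS5 F') hI5 hImod
  intro u χ hχ π' hπ'
  have h1 : π' ∈ F'.sig star := F'.sig_sub_star u hπ'
  exact (innerS5_sat F' χ π' h1).mp (hkey u χ hχ π' hπ')

/-! ### The outer part -/

lemma comb2_sat_inr {T : Set (SExpr A S)} (F : SFFS A S P star) (h5 : F.IsS5)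
    (F' : SFFS A S R star)
    (hneg : ∀ χ ∈ PhiOf T F, ∀ q ∈ F'.Pi, ¬ F'.sat χ q)
    (hbin : ∀ (u : S) (χ : SForm A S), SForm.box u χ ∈ PsiOf T F →
      ∀ π' ∈ F'.sig u, F'.sat χ π') :
    ∀ φ : SForm A S, BoxedIn T φ → ∀ π ∈ F'.tau star,
      ((comb F h5 F'.tau F'.tau_sub_star F'.val).sat φ (Sum.inr π) ↔ F'.sat φ π) := by
  intro φ
  induction φ with
  | atom p => intro _ π hπ; exact Iff.rfl
  | neg φ ih => intro hB π hπ; simp only [SFFS.sat]; exact not_congr (ih hB.neg π hπ)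
  | and φ ψ ih1 ih2 =>
    intro hB π hπ; simp only [SFFS.sat]
    exact and_congr (ih1 hB.and_left π hπ) (ih2 hB.and_right π hπ)
  | box u χ ih =>
    intro hB π hπ
    have hπPi : π ∈ F'.Pi := F'.tau_sub star hπ
    have hπσ : π ∉ F'.sig star := fun hc => F'.not_sig_tau hc hπ
    have h1 : Sum.inr (α := P) (β := R) π ∉ (comb F h5 F'.tau F'.tau_sub_star F'.val).sig star := by
      rintro ⟨π', -, hc⟩; exact Sum.inl_ne_inr hc
    have h2 : Sum.inr π ∈ (comb F h5 F'.tau F'.tau_sub_star F'.val).tau star := ⟨π, hπ, rfl⟩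
    rw [sat_box_outer _ h1 h2, sat_box_outer F' hπσ hπ u χ]
    by_cases hm : F.models (SForm.box u χ)
    · constructor
      · intro h x hx
        rcases hx with hx | hx
        · exact hbin u χ ⟨hB.self, hm⟩ x hx
        · exact (ih hB.box x (F'.tau_sub_star u hx)).mp (h _ (Or.inr ⟨x, hx, rfl⟩))
      · intro h x hx
        rcases hx with ⟨π', hπ', rfl⟩ | ⟨π', hπ', rfl⟩
        · exact (comb_sat_inl F h5 F'.tau _ F'.val χ π' (F.sig_sub u hπ')).mpr
            ((models_box_S5 F h5 u χ).mp hm π' hπ')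
        · exact (ih hB.box π' (F'.tau_sub_star u hπ')).mpr (h π' (Or.inr hπ'))
    · apply iff_of_false
      · intro h
        apply hm
        rw [models_box_S5 F h5]
        intro π' hπ'
        exact (comb_sat_inl F h5 F'.tau _ F'.val χ π' (F.sig_sub u hπ')).mp
          (h _ (Or.inl ⟨π', hπ', rfl⟩))
      · intro h
        have hc := hneg _ ⟨hB.self, fun hc => hm hc.2⟩ π hπPi
        rw [sat_box_outer F' hπσ hπ u χ] at hc
        exact hc h

lemma comb2_isModel {T : Set (SExpr A S)} (F : SFFS A S P star) (h5 : F.IsS5)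
    (hMF : F.isModel T) (F' : SFFS A S R star)
    (hF' : F'.isModel (T ∪ (SExpr.form '' (SForm.neg '' PhiOf T F))))
    (hbin : ∀ (u : S) (χ : SForm A S), SForm.box u χ ∈ PsiOf T F →
      ∀ π' ∈ F'.sig u, F'.sat χ π') :
    (comb F h5 F'.tau F'.tau_sub_star F'.val).isModel T := by
  have hF'T : F'.isModel T := fun e he => hF' e (Or.inl he)
  intro e he x hx
  cases e with
  | form φ =>
    rcases hx with ⟨π, hπ, rfl⟩ | ⟨π, hπ, rfl⟩
    · exact (comb_sat_inl F h5 F'.tau _ F'.val φ π hπ).mpr (hMF _ he π hπ)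
    · exact (comb2_sat_inr F h5 F' (negPhi_false F' hF') hbin φ
        (boxedIn_of_form_mem he) π hπ).mpr (hF'T _ he π (F'.tau_sub star hπ))
  | sharp a b =>
    obtain ⟨π₀, hπ₀⟩ := F.nonempty_Pi
    obtain ⟨q₀, hq₀⟩ := F'.nonempty_Pi
    have hF := hMF _ he π₀ hπ₀
    have hG2 := hF'T _ he q₀ hq₀
    simp only [SFFS.satE] at hF hG2 ⊢
    exact ⟨Set.image_mono hF.1, Set.image_mono hG2.2⟩

lemma transfer_out {T : Set (SExpr A S)} (F : SFFS A S P star) (h5 : F.IsS5)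
    (F' : SFFS A S R star)
    (hneg : ∀ χ ∈ PhiOf T F, ∀ q ∈ F'.Pi, ¬ F'.sat χ q)
    (hbin : ∀ (u : S) (χ : SForm A S), SForm.box u χ ∈ PsiOf T F →
      ∀ π' ∈ F'.sig u, F'.sat χ π')
    (incl2 : ∀ u, F'.val '' F'.tau u ⊆ F.val '' F.sig u) :
    ∀ φ : SForm A S, BoxedIn T φ → ∀ π' ∈ F'.tau star, ∀ π ∈ F.Pi,
      F'.val π' = F.val π → (F'.sat φ π' ↔ F.sat φ π) := by
  intro φ
  induction φ with
  | atom p =>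
    intro _ π' hπ' π hπ hv
    show p ∈ F'.val π' ↔ p ∈ F.val π
    rw [hv]
  | neg φ ih =>
    intro hB π' hπ' π hπ hv; simp only [SFFS.sat]
    exact not_congr (ih hB.neg π' hπ' π hπ hv)
  | and φ ψ ih1 ih2 =>
    intro hB π' hπ' π hπ hv; simp only [SFFS.sat]
    exact and_congr (ih1 hB.and_left π' hπ' π hπ hv) (ih2 hB.and_right π' hπ' π hπ hv)
  | box u χ ih =>
    intro hB π' hπ' π hπ hv
    have hπ'Pi : π' ∈ F'.Pi := F'.tau_sub star hπ'
    have hπ'σ : π' ∉ F'.sig star := fun hc => F'.not_sig_tau hc hπ'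
    rw [sat_box_outer F' hπ'σ hπ' u χ, sat_box_S5 F h5 hπ u χ]
    by_cases hm : F.models (SForm.box u χ)
    · apply iff_of_true
      · intro x hx
        rcases hx with hx | hx
        · exact hbin u χ ⟨hB.self, hm⟩ x hx
        · obtain ⟨π₁, hπ₁, heq⟩ := incl2 u ⟨x, hx, rfl⟩
          exact (ih hB.box x (F'.tau_sub_star u hx) π₁ (F.sig_sub u hπ₁) heq.symm).mpr
            ((models_box_S5 F h5 u χ).mp hm π₁ hπ₁)
      · exact (models_box_S5 F h5 u χ).mp hm
    · apply iff_of_false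
      · intro h
        have hc := hneg _ ⟨hB.self, fun hc => hm hc.2⟩ π' hπ'Pi
        rw [sat_box_outer F' hπ'σ hπ' u χ] at hc
        exact hc h
      · intro h
        exact hm ((models_box_S5 F h5 u χ).mpr h)

/-! ### Condition (C3) -/

lemma C3_holds {T : Set (SExpr A S)} {F : SFFS A S P star}
    (hmin : isMinimalModel F T) : C3 star T (PhiOf T F) (PsiOf T F) := by
  intro s ψ hψ P' F' hF'
  have hbin := bin_holds hmin F' hF'
  have hneg := negPhi_false F' hF'
  have hmod2 := comb2_isModel F hmin.1 hmin.2.1 F' hF' hbin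
  have incl2 := comb_min_incl F hmin.1 hmin.2.2 F'.tau F'.tau_sub_star F'.val hmod2
  have htrans := transfer_out F hmin.1 F' hneg hbin incl2
  intro π hπ
  show F'.sat (SForm.box s ψ) π
  simp only [SFFS.sat]
  refine ⟨fun _ π' hπ' => hbin s ψ hψ π' hπ', fun hτ π' hπ' => ?_⟩
  rcases hπ' with h | h
  · exact hbin s ψ hψ π' h
  · obtain ⟨π₁, hπ₁, heq⟩ := incl2 s ⟨π', h, rfl⟩
    have hB : BoxedIn T ψ := (boxedIn_of_memSubBox hψ.1).box
    exact (htrans ψ hB π' (F'.tau_sub_star s h) π₁ (F.sig_sub s hπ₁) heq.symm).mpr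
      ((models_box_S5 F hmin.1 s ψ).mp hψ.2 π₁ hπ₁)

end AuxDev


/-- if the S5 standpoint structure `F` is a minimal model of `T`, then the
partition `(Φ, Ψ)` of `Sub□(T)` with `Ψ := {□_u φ ∈ Sub□(T) : F ⊩ □_u φ}` and
`Φ := Sub□(T) \ Ψ` satisfies (C1), (C2) and (C3); in particular such a partition exists. -/
theorem minimal_model_gives_partition_C1_C2_C3 {A S P : Type} (star : S)
    (T : Set (SExpr A S)) (F : SFFS A S P star) (hmin : isMinimalModel F T) :
    (C1 star T (SubBox T \ {χ ∈ SubBox T | F.models χ}) {χ ∈ SubBox T | F.models χ} ∧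
     C2 star T (SubBox T \ {χ ∈ SubBox T | F.models χ}) {χ ∈ SubBox T | F.models χ} ∧
     C3 star T (SubBox T \ {χ ∈ SubBox T | F.models χ}) {χ ∈ SubBox T | F.models χ}) ∧
    (∃ Φ Ψ : Set (SForm A S), Φ ∪ Ψ = SubBox T ∧ Disjoint Φ Ψ ∧
       C1 star T Φ Ψ ∧ C2 star T Φ Ψ ∧ C3 star T Φ Ψ) := by
  have hC1 : C1 star T (PhiOf T F) (PsiOf T F) := C1_holds F hmin.1 hmin.2.1
  have hC2 : C2 star T (PhiOf T F) (PsiOf T F) := C2_holds F hmin.1 hmin.2.1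
  have hC3 : C3 star T (PhiOf T F) (PsiOf T F) := C3_holds hmin
  have hsub : PsiOf T F ⊆ SubBox T := fun χ hχ => hχ.1
  refine ⟨⟨hC1, hC2, hC3⟩, PhiOf T F, PsiOf T F, ?_, ?_, hC1, hC2, hC3⟩
  · exact Set.diff_union_of_subset hsub
  · exact disjoint_sdiff_self_left
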